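/- Let G be a finite group. Call a subspace L of the augmentation ideal of ℂ[G] admissible if it is invariant under conjugation by every h ∈ G and under D_a for every a : G → ℂ. Then the map C ↦ L_C := span_ℂ{ x_g : g ∈ C } is a bijection from the set of conjugacy classes of G not containing 1 onto the set of minimal nonzero admissible subspaces (i.e. nonzero admissible L such that every nonzero admissible subspace contained in L equals L). -/

import Mathlib

open MonoidAlgebra

set_option linter.unusedSectionVars false

noncomputable section

variable {G : Type*} [Group G] [Fintype G]

/-- The augmentation map `ε : ℂ[G] → ℂ`, the algebra map sending each group element to `1`. -/
def aug (G : Type*) [Group G] : MonoidAlgebra ℂ G →ₐ[ℂ] ℂ :=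
  MonoidAlgebra.lift ℂ ℂ G 1

/-- `x_g := g - 1` in the group algebra. -/
def xElt (g : G) : MonoidAlgebra ℂ G :=
  MonoidAlgebra.of ℂ G g - 1

/-- The linear endomorphism `D_a` of `ℂ[G]` with `D_a(g) = a(g)·g - a(g)·1` on basis elements. -/
def Dop (a : G → ℂ) : MonoidAlgebra ℂ G →ₗ[ℂ] MonoidAlgebra ℂ G :=
  (Finsupp.lsum ℂ fun g => LinearMap.toSpanSingleton ℂ _ (a g • xElt g)) ∘ₗ
    (MonoidAlgebra.coeffLinearEquiv ℂ).toLinearMap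

/-- A subspace of the augmentation ideal invariant under conjugation and all `D_a`. -/
def Admissible (L : Submodule ℂ (MonoidAlgebra ℂ G)) : Prop :=
  (∀ y ∈ L, aug G y = 0) ∧
  (∀ h : G, ∀ y ∈ L, MonoidAlgebra.of ℂ G h * y * MonoidAlgebra.of ℂ G h⁻¹ ∈ L) ∧
  (∀ a : G → ℂ, ∀ y ∈ L, Dop a y ∈ L)

lemma aug_single (g : G) (c : ℂ) : aug G (MonoidAlgebra.single g c) = c := by
  simp [aug]

lemma xElt_eq (g : G) : xElt g = MonoidAlgebra.single g 1 - MonoidAlgebra.single 1 1 := by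
  simp [xElt, MonoidAlgebra.of_apply, MonoidAlgebra.one_def]

lemma xElt_one : xElt (1 : G) = 0 := by simp [xElt_eq]

lemma aug_xElt (g : G) : aug G (xElt g) = 0 := by
  simp [xElt_eq, map_sub, aug_single]

lemma Dop_single (a : G → ℂ) (g : G) (c : ℂ) :
    Dop a (MonoidAlgebra.single g c) = c • (a g • xElt g) := by
  rw [Dop, LinearMap.comp_apply]
  erw [Finsupp.lsum_single]
  rw [LinearMap.toSpanSingleton_apply]

lemma Dop_xElt (a : G → ℂ) (g : G) : Dop a (xElt g) = a g • xElt g := by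
  rw [xElt_eq g, map_sub, Dop_single, Dop_single, xElt_one, smul_zero, smul_zero, one_smul,
    sub_zero, ← xElt_eq]

lemma conj_xElt (h g : G) :
    MonoidAlgebra.of ℂ G h * xElt g * MonoidAlgebra.of ℂ G h⁻¹ = xElt (h * g * h⁻¹) := by
  simp [xElt, mul_sub, sub_mul, ← MonoidAlgebra.of_apply, ← map_mul, mul_assoc, mul_inv_cancel]

lemma xElt_apply_self {g : G} (hg : g ≠ 1) : (xElt g).coeff g = 1 := by
  classical
  rw [xElt_eq, MonoidAlgebra.coeff_sub, Finsupp.sub_apply]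
  simp [MonoidAlgebra.coeff_single, Finsupp.single_apply, (Ne.symm hg)]

lemma xElt_apply_ne {g k : G} (h1 : g ≠ k) (h2 : k ≠ 1) : (xElt g).coeff k = 0 := by
  classical
  rw [xElt_eq, MonoidAlgebra.coeff_sub, Finsupp.sub_apply]
  simp [MonoidAlgebra.coeff_single, Finsupp.single_apply, h1, (Ne.symm h2)]

lemma xElt_ne_zero {g : G} (hg : g ≠ 1) : xElt g ≠ 0 := by
  intro h
  have := xElt_apply_self hg
  rw [h] at this
  simp at this

lemma aug_eq_sum (y : MonoidAlgebra ℂ G) : aug G y = ∑ g ∈ y.coeff.support, y.coeff g := by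
  conv_lhs => rw [← MonoidAlgebra.ofCoeff_coeff y, ← Finsupp.sum_single y.coeff]
  rw [MonoidAlgebra.ofCoeff_finsuppSum, Finsupp.sum, map_sum]
  refine Finset.sum_congr rfl fun g _ => ?_
  exact aug_single g (y.coeff g)

lemma eq_sum_xElt (y : MonoidAlgebra ℂ G) (hy : aug G y = 0) :
    y = ∑ g ∈ y.coeff.support, y.coeff g • xElt g := by
  have h1 : (∑ g ∈ y.coeff.support, y.coeff g • xElt g : MonoidAlgebra ℂ G)
      = (∑ g ∈ y.coeff.support, MonoidAlgebra.single g (y.coeff g)) -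
        (∑ g ∈ y.coeff.support, y.coeff g) • MonoidAlgebra.single (1:G) (1:ℂ) := by
    rw [Finset.sum_smul, ← Finset.sum_sub_distrib]
    refine Finset.sum_congr rfl fun g _ => ?_
    rw [xElt_eq, smul_sub, MonoidAlgebra.smul_single', mul_one]
  rw [h1, ← aug_eq_sum, hy, zero_smul, sub_zero]
  conv_lhs => rw [← MonoidAlgebra.ofCoeff_coeff y, ← Finsupp.sum_single y.coeff]
  rw [MonoidAlgebra.ofCoeff_finsuppSum]
  rfl

lemma xElt_mem_of_coeff {L : Submodule ℂ (MonoidAlgebra ℂ G)} (hL : Admissible L)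
    {y : MonoidAlgebra ℂ G} (hy : y ∈ L) {g : G} (hg : y.coeff g ≠ 0) : xElt g ∈ L := by
  classical
  set a : G → ℂ := fun k => if k = g then 1 else 0 with ha
  have h1 : Dop a y = y.coeff g • xElt g := by
    rw [Dop, LinearMap.comp_apply, LinearEquiv.coe_coe, MonoidAlgebra.coeffLinearEquiv_apply]
    erw [Finsupp.lsum_apply]
    rw [Finsupp.sum, Finset.sum_eq_single g]
    · rw [LinearMap.toSpanSingleton_apply]; simp [ha]
    · intro k _ hkg
      rw [LinearMap.toSpanSingleton_apply]
      simp [ha, hkg]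
    · intro hgs
      rw [Finsupp.notMem_support_iff.mp hgs]
      simp
  have h2 := hL.2.2 a y hy
  rw [h1] at h2
  have h3 : (y.coeff g)⁻¹ • (y.coeff g • xElt g) ∈ L := L.smul_mem _ h2
  rwa [smul_smul, inv_mul_cancel₀ hg, one_smul] at h3

lemma exists_xElt_mem {L : Submodule ℂ (MonoidAlgebra ℂ G)} (hL : Admissible L) (hne : L ≠ ⊥) :
    ∃ g : G, g ≠ 1 ∧ xElt g ∈ L := by
  obtain ⟨y, hyL, hy0⟩ := Submodule.exists_mem_ne_zero_of_ne_bot hne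
  by_cases h : ∃ g ∈ y.coeff.support, g ≠ 1
  · obtain ⟨g, hg, hg1⟩ := h
    exact ⟨g, hg1, xElt_mem_of_coeff hL hyL (Finsupp.mem_support_iff.mp hg)⟩
  · exfalso
    push_neg at h
    have hsub : y.coeff.support ⊆ {1} := fun g hg => Finset.mem_singleton.mpr (h g hg)
    have hy1 : y.coeff = Finsupp.single 1 (y.coeff 1) := Finsupp.support_subset_singleton.mp hsub
    have haug : aug G y = y.coeff 1 := by
      conv_lhs => rw [← MonoidAlgebra.ofCoeff_coeff y, hy1]
      exact aug_single 1 (y.coeff 1)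
    rw [hL.1 y hyL] at haug
    rw [← MonoidAlgebra.ofCoeff_coeff y, hy1, ← haug] at hy0
    simp at hy0

def coeffMap (g : G) : MonoidAlgebra ℂ G →ₗ[ℂ] ℂ :=
  Finsupp.lapply g ∘ₗ (MonoidAlgebra.coeffLinearEquiv ℂ).toLinearMap

lemma mem_of_xElt_mem_span {C : Set G} {g : G} (hg : g ≠ 1)
    (h : xElt g ∈ Submodule.span ℂ (xElt '' C)) : g ∈ C := by
  by_contra hgC
  have hker : xElt '' C ⊆ (LinearMap.ker (coeffMap g) : Set (MonoidAlgebra ℂ G)) := by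
    rintro _ ⟨k, hk, rfl⟩
    simp only [SetLike.mem_coe, LinearMap.mem_ker, coeffMap, LinearMap.comp_apply,
      LinearEquiv.coe_coe, MonoidAlgebra.coeffLinearEquiv_apply, Finsupp.lapply_apply]
    exact xElt_apply_ne (fun e => hgC (e ▸ hk)) hg
  have h2 := Submodule.span_le.mpr hker h
  simp only [LinearMap.mem_ker, coeffMap] at h2
  have h3 : (xElt g).coeff g = 0 := h2
  rw [xElt_apply_self hg] at h3
  exact one_ne_zero h3

lemma admissible_span {C : Set G} (hC : ∀ g ∈ C, ∀ h : G, h * g * h⁻¹ ∈ C) :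
    Admissible (Submodule.span ℂ (xElt '' C)) := by
  refine ⟨?_, ?_, ?_⟩
  · intro y hy
    have hle : Submodule.span ℂ (xElt '' C) ≤ LinearMap.ker (aug G).toLinearMap := by
      rw [Submodule.span_le]
      rintro _ ⟨k, _, rfl⟩
      exact aug_xElt k
    exact hle hy
  · intro h y hy
    induction hy using Submodule.span_induction with
    | mem x hx =>
      obtain ⟨k, hk, rfl⟩ := hx
      rw [conj_xElt]
      exact Submodule.subset_span ⟨_, hC k hk h, rfl⟩
    | zero => simp
    | add y z _ _ hy' hz' =>
      rw [mul_add, add_mul]; exact Submodule.add_mem _ hy' hz'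
    | smul c y _ hy' =>
      rw [mul_smul_comm, smul_mul_assoc]; exact Submodule.smul_mem _ _ hy'
  · intro a y hy
    induction hy using Submodule.span_induction with
    | mem x hx =>
      obtain ⟨k, hk, rfl⟩ := hx
      rw [Dop_xElt]
      exact Submodule.smul_mem _ _ (Submodule.subset_span ⟨_, hk, rfl⟩)
    | zero => simp
    | add y z _ _ hy' hz' => rw [map_add]; exact Submodule.add_mem _ hy' hz'
    | smul c y _ hy' => rw [map_smul]; exact Submodule.smul_mem _ _ hy'

lemma span_class_le {L : Submodule ℂ (MonoidAlgebra ℂ G)} (hL : Admissible L) {g : G}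
    (hg : xElt g ∈ L) : Submodule.span ℂ (xElt '' {h | IsConj g h}) ≤ L := by
  rw [Submodule.span_le]
  rintro _ ⟨k, hk, rfl⟩
  obtain ⟨c, hc⟩ := isConj_iff.mp hk
  rw [← hc, ← conj_xElt]
  exact hL.2.1 c _ hg

lemma class_conj_closed (g0 : G) :
    ∀ g ∈ {h | IsConj g0 h}, ∀ h : G, h * g * h⁻¹ ∈ {h | IsConj g0 h} :=
  fun g hg h => hg.trans (isConj_iff.mpr ⟨h, rfl⟩)

lemma subset_of_span_le {C1 C2 : Set G} (h1 : (1:G) ∉ C1)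
    (h : Submodule.span ℂ (xElt '' C1) ≤ Submodule.span ℂ (xElt '' C2)) : C1 ⊆ C2 :=
  fun k hk => mem_of_xElt_mem_span (fun e => h1 (e ▸ hk)) (h (Submodule.subset_span ⟨k, hk, rfl⟩))

lemma span_class_ne_bot {g : G} (hg : g ≠ 1) :
    Submodule.span ℂ (xElt '' {h | IsConj g h}) ≠ ⊥ := by
  intro hbot
  have hm : xElt g ∈ Submodule.span ℂ (xElt '' {h | IsConj g h}) :=
    Submodule.subset_span ⟨g, IsConj.refl g, rfl⟩
  rw [hbot, Submodule.mem_bot] at hm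
  exact xElt_ne_zero hg hm

theorem stmt2 :
    Set.BijOn (fun C : Set G => Submodule.span ℂ (xElt '' C))
      {C : Set G | (∃ g : G, C = {h | IsConj g h}) ∧ (1 : G) ∉ C}
      {L : Submodule ℂ (MonoidAlgebra ℂ G) | Admissible L ∧ L ≠ ⊥ ∧
        ∀ L' : Submodule ℂ (MonoidAlgebra ℂ G), Admissible L' → L' ≠ ⊥ → L' ≤ L → L' = L} := by
  refine ⟨?_, ?_, ?_⟩
  · -- MapsTo
    rintro C ⟨⟨g0, rfl⟩, h1⟩
    have hg0 : g0 ∈ {h | IsConj g0 h} := IsConj.refl g0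
    have hg01 : g0 ≠ 1 := fun e => h1 (e ▸ hg0)
    refine ⟨admissible_span (class_conj_closed g0), span_class_ne_bot hg01, ?_⟩
    intro L' hL' hL'ne hle
    obtain ⟨g, hg1, hgL'⟩ := exists_xElt_mem hL' hL'ne
    have hgC : g ∈ {h | IsConj g0 h} := mem_of_xElt_mem_span hg1 (hle hgL')
    refine le_antisymm hle ?_
    have hset : {h | IsConj g0 h} = {h | IsConj g h} := by
      ext k
      exact ⟨fun hk => hgC.symm.trans hk, fun hk => (hgC : IsConj g0 g).trans hk⟩
    rw [hset]
    exact span_class_le hL' hgL'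
  · -- InjOn
    rintro C1 ⟨⟨g1, rfl⟩, h11⟩ C2 ⟨⟨g2, rfl⟩, h21⟩ heq
    simp only at heq
    exact Set.Subset.antisymm (subset_of_span_le h11 heq.le) (subset_of_span_le h21 heq.ge)
  · -- SurjOn
    rintro L ⟨hadm, hne, hmin⟩
    obtain ⟨g, hg1, hgL⟩ := exists_xElt_mem hadm hne
    refine ⟨{h | IsConj g h}, ⟨⟨g, rfl⟩, ?_⟩, ?_⟩
    · intro hmem
      exact hg1 (isConj_one_right.mp hmem.symm)
    · exact hmin _ (admissible_span (class_conj_closed g)) (span_class_ne_bot hg1)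
        (span_class_le hadm hgL)

end
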